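/- Let p̄ = A^{−1}(q − γ/Γ). If schools are indexed so that γ_1/q_1 ≤ γ_2/q_2 ≤ ⋯ ≤ γ_n/q_n, then p̄ is sorted in nondecreasing order; more precisely, for each c < n, p̄_{c+1} − p̄_c = (Σ_{j=1}^{c} γ_j)(q_c/γ_c − q_{c+1}/γ_{c+1}) ≥ 0. -/
import Mathlib


open Finset

/-- The explicit inverse `A⁻¹` of the demand matrix: diagonal
`-(Σ_{k ≤ i} γ_k)/γ_i`, `-1` above the diagonal, `0` below. -/
noncomputable def Bmat {n : ℕ} (γ : Fin n → ℝ) : Matrix (Fin n) (Fin n) ℝ :=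
  Matrix.of fun i j =>
    if i = j then -(∑ k ∈ Iic i, γ k) / γ i
    else if i < j then -1
    else 0

lemma Bmat_lt {n : ℕ} (γ : Fin n → ℝ) {i j : Fin n} (h : j < i) : Bmat γ i j = 0 := by
  simp only [Bmat, Matrix.of_apply]
  rw [if_neg (by exact fun e => absurd e.symm (ne_of_lt h)), if_neg (asymm h)]

lemma Bmat_gt {n : ℕ} (γ : Fin n → ℝ) {i j : Fin n} (h : i < j) : Bmat γ i j = -1 := by
  simp only [Bmat, Matrix.of_apply]
  rw [if_neg (ne_of_lt h), if_pos h]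

lemma Bmat_diag {n : ℕ} (γ : Fin n → ℝ) (i : Fin n) :
    Bmat γ i i = -(∑ k ∈ Iic i, γ k) / γ i := by
  simp [Bmat]

lemma diff_formula {n : ℕ} (γ q : Fin n → ℝ) (hγ : ∀ i, 0 < γ i)
    (c : Fin n) (h : (c : ℕ) + 1 < n) :
    (Bmat γ).mulVec (fun c => q c - γ c / (∑ i, γ i)) ⟨(c : ℕ) + 1, h⟩ -
      (Bmat γ).mulVec (fun c => q c - γ c / (∑ i, γ i)) c =
      (∑ j ∈ Iic c, γ j) * (q c / γ c - q ⟨(c : ℕ) + 1, h⟩ / γ ⟨(c : ℕ) + 1, h⟩) := by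
  set Γ : ℝ := ∑ i, γ i with hΓdef
  have hΓ : 0 < Γ := Finset.sum_pos (fun i _ => hγ i) ⟨c, mem_univ _⟩
  set c' : Fin n := ⟨(c : ℕ) + 1, h⟩ with hc'
  have hcc' : c < c' := by simp [hc', Fin.lt_def]
  have hne : c ≠ c' := ne_of_lt hcc'
  have hS : ∑ k ∈ Iic c', γ k = (∑ k ∈ Iic c, γ k) + γ c' := by
    have hIic : Iic c' = insert c' (Iic c) := by
      ext k
      simp only [mem_Iic, mem_insert, Fin.le_def, Fin.ext_iff, hc']
      omega
    rw [hIic, Finset.sum_insert (by simp [hc', Fin.le_def])]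
    ring
  simp only [Matrix.mulVec, dotProduct]
  rw [← Finset.sum_sub_distrib]
  have hsub : ({c, c'} : Finset (Fin n)) ⊆ univ := subset_univ _
  rw [← Finset.sum_subset hsub (fun x _ hx => by
    simp only [mem_insert, mem_singleton, not_or] at hx
    obtain ⟨hx1, hx2⟩ := hx
    have hv : (x : ℕ) < (c : ℕ) ∨ (c : ℕ) + 1 < (x : ℕ) := by
      have e1 : (x : ℕ) ≠ (c : ℕ) := fun e => hx1 (Fin.ext e)
      have e2 : (x : ℕ) ≠ (c : ℕ) + 1 := fun e => hx2 (Fin.ext e)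
      omega
    rcases hv with hv | hv
    · rw [Bmat_lt γ (show x < c from hv), Bmat_lt γ (show x < c' from by
        rw [Fin.lt_def]; omega)]
      ring
    · rw [Bmat_gt γ (show c < x from by rw [Fin.lt_def]; omega),
        Bmat_gt γ (show c' < x from by rw [Fin.lt_def]; exact hv)]
      ring)]
  rw [Finset.sum_pair hne]
  rw [Bmat_lt γ hcc', Bmat_diag, Bmat_diag, Bmat_gt γ hcc', hS]
  have h1 : γ c ≠ 0 := ne_of_gt (hγ c)
  have h2 : γ c' ≠ 0 := ne_of_gt (hγ c')
  field_simp
  ring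

/-- If schools are indexed in ascending order of competitiveness ratios
`γ_c / q_c`, then `p̄ = A⁻¹ (q - γ/Γ)` is sorted in nondecreasing order, and
`p̄_{c+1} - p̄_c = (Σ_{j ≤ c} γ_j)(q_c/γ_c - q_{c+1}/γ_{c+1}) ≥ 0`. -/
theorem pbar_sorted {n : ℕ} (γ q : Fin n → ℝ)
    (hγ : ∀ i, 0 < γ i) (hq : ∀ i, 0 < q i)
    (hratio : ∀ i j : Fin n, i ≤ j → γ i / q i ≤ γ j / q j) :
    letI Γ : ℝ := ∑ i, γ i
    letI pbar : Fin n → ℝ := (Bmat γ).mulVec fun c => q c - γ c / Γ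
    (∀ (c : Fin n) (h : (c : ℕ) + 1 < n),
        pbar ⟨(c : ℕ) + 1, h⟩ - pbar c =
          (∑ j ∈ Iic c, γ j) * (q c / γ c - q ⟨(c : ℕ) + 1, h⟩ / γ ⟨(c : ℕ) + 1, h⟩) ∧
        0 ≤ pbar ⟨(c : ℕ) + 1, h⟩ - pbar c) ∧
    Monotone pbar := by
  set pbar : Fin n → ℝ := (Bmat γ).mulVec fun c => q c - γ c / ∑ i, γ i with hp
  have main : ∀ (c : Fin n) (h : (c : ℕ) + 1 < n),
      pbar ⟨(c : ℕ) + 1, h⟩ - pbar c =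
        (∑ j ∈ Iic c, γ j) * (q c / γ c - q ⟨(c : ℕ) + 1, h⟩ / γ ⟨(c : ℕ) + 1, h⟩) ∧
      0 ≤ pbar ⟨(c : ℕ) + 1, h⟩ - pbar c := by
    intro c h
    have hd := diff_formula γ q hγ c h
    refine ⟨hd, ?_⟩
    rw [hd]
    set c' : Fin n := ⟨(c : ℕ) + 1, h⟩ with hc'
    have hle : c ≤ c' := by simp [hc', Fin.le_def]
    have hr := hratio c c' hle
    have hqq : q c' / γ c' ≤ q c / γ c := by
      rw [div_le_div_iff₀ (hγ c') (hγ c)]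
      rw [div_le_div_iff₀ (hq c) (hq c')] at hr
      nlinarith
    have hSpos : 0 < ∑ j ∈ Iic c, γ j :=
      Finset.sum_pos (fun i _ => hγ i) ⟨c, mem_Iic.2 le_rfl⟩
    have := sub_nonneg.2 hqq
    positivity
  refine ⟨main, ?_⟩
  cases n with
  | zero => exact fun a => a.elim0
  | succ m =>
    rw [Fin.monotone_iff_le_succ]
    intro i
    rw [← sub_nonneg]
    have h2 : ((i.castSucc : Fin (m + 1)) : ℕ) + 1 < m + 1 := by
      simp only [Fin.coe_castSucc]; omega
    have e : i.succ = (⟨((i.castSucc : Fin (m + 1)) : ℕ) + 1, h2⟩ : Fin (m + 1)) :=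
      Fin.ext (by simp)
    rw [e]
    exact (main i.castSucc h2).2
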